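/- For every s ≥ 1, m ≥ 1 and every injective λ : {1,…,n} × {0,…,s−1} → F, the code C(n,k,s,m,λ) is an MDS array code: if c and c' are codewords of C(n,k,s,m,λ) and S ⊆ {1,…,n} is a set with |S| = k such that c(i,b,a) = c'(i,b,a) for every i ∈ S, every b ∈ {1,…,m} and every a ∈ {0,…,s−1}^n, then c = c'. -/
import Mathlib


/-- The code `C(n,k,s,m,λ)`: an array `c : {1,…,n} × {1,…,m} × {0,…,s-1}^n → F`
(node index `i : Fin n`, block index `b ∈ {1,…,m}` as a natural number,
`a : Fin n → Fin s`) satisfying the parity-check equations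
`∑_{i=1}^n λ(i,a_i)^t · c(i,b,a) = 0` for all `t ∈ {0,…,n-k-1}`,
`b ∈ {1,…,m}` and `a ∈ {0,…,s-1}^n`. -/
def IsCodeword {F : Type*} [Field F] {n : ℕ} (k s m : ℕ)
    (lam : Fin n → Fin s → F) (c : Fin n → ℕ → (Fin n → Fin s) → F) : Prop :=
  ∀ t < n - k, ∀ b ∈ Finset.Icc 1 m, ∀ a : Fin n → Fin s,
    ∑ i, lam i (a i) ^ t * c i b a = 0

/-- `C(n,k,s,m,λ)` is an MDS array code: any two codewords agreeing
on `k` nodes are equal. -/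
theorem stmt_1 {F : Type*} [Field F] (n k s m : ℕ)
    (hk : 1 ≤ k) (hkn : k < n) (hs : 1 ≤ s) (hm : 1 ≤ m)
    (lam : Fin n → Fin s → F)
    (hlam : Function.Injective fun p : Fin n × Fin s => lam p.1 p.2)
    (c c' : Fin n → ℕ → (Fin n → Fin s) → F)
    (hc : IsCodeword k s m lam c) (hc' : IsCodeword k s m lam c')
    (S : Finset (Fin n)) (hScard : S.card = k)
    (heq : ∀ i ∈ S, ∀ b ∈ Finset.Icc 1 m, ∀ a : Fin n → Fin s, c i b a = c' i b a) :
    ∀ i : Fin n, ∀ b ∈ Finset.Icc 1 m, ∀ a : Fin n → Fin s, c i b a = c' i b a := by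
  intro i b hb a
  by_cases hiS : i ∈ S
  · exact heq i hiS b hb a
  set N := n - k with hN
  have hcompl : Sᶜ.card = N := by
    rw [Finset.card_compl, hScard, Fintype.card_fin]
  have e : Fin N ≃ {x // x ∈ Sᶜ} := (Sᶜ.equivFinOfCardEq hcompl).symm
  set v : Fin N → F := fun j => lam (e j : Fin n) (a (e j : Fin n)) with hv
  set d : Fin N → F := fun j => c (e j : Fin n) b a - c' (e j : Fin n) b a with hd
  have hvinj : Function.Injective v := by
    intro j1 j2 h
    have h2 : (fun p : Fin n × Fin s => lam p.1 p.2) ((e j1 : Fin n), a (e j1 : Fin n))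
        = (fun p : Fin n × Fin s => lam p.1 p.2) ((e j2 : Fin n), a (e j2 : Fin n)) := h
    have h1 : (e j1 : Fin n) = (e j2 : Fin n) := congrArg Prod.fst (hlam h2)
    exact e.injective (Subtype.ext h1)
  -- the Vandermonde system
  have hsys : ∀ t < N, ∑ j, v j ^ t * d j = 0 := by
    intro t ht
    have h1 := hc t ht b hb a
    have h2 := hc' t ht b hb a
    have hdiff : ∑ x : Fin n, lam x (a x) ^ t * (c x b a - c' x b a) = 0 := by
      have hsd : ∑ x : Fin n, lam x (a x) ^ t * (c x b a - c' x b a)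
          = (∑ x : Fin n, lam x (a x) ^ t * c x b a)
            - ∑ x : Fin n, lam x (a x) ^ t * c' x b a := by
        rw [← Finset.sum_sub_distrib]
        congr 1; ext x; ring
      rw [hsd, h1, h2, sub_zero]
    have hsplit : ∑ x ∈ Sᶜ, lam x (a x) ^ t * (c x b a - c' x b a) = 0 := by
      rw [← hdiff]
      apply Finset.sum_subset (Finset.subset_univ _)
      intro x _ hx
      have hxS : x ∈ S := by simpa using hx
      rw [heq x hxS b hb a, sub_self, mul_zero]
    have hcomp := e.sum_comp
      (fun x : {x // x ∈ Sᶜ} => lam (x : Fin n) (a (x : Fin n)) ^ t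
        * (c (x : Fin n) b a - c' (x : Fin n) b a))
    calc ∑ j, v j ^ t * d j
        = ∑ x : {x // x ∈ Sᶜ}, lam (x : Fin n) (a (x : Fin n)) ^ t
            * (c (x : Fin n) b a - c' (x : Fin n) b a) := hcomp
      _ = ∑ x ∈ Sᶜ, lam x (a x) ^ t * (c x b a - c' x b a) :=
          Finset.sum_coe_sort Sᶜ (fun x => lam x (a x) ^ t * (c x b a - c' x b a))
      _ = 0 := hsplit
  have hd0 : d = 0 := by
    apply Matrix.eq_zero_of_forall_pow_sum_mul_pow_eq_zero hvinj
    intro t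
    rw [← hsys t t.2]
    congr 1; ext j; ring
  have hiSc : i ∈ Sᶜ := Finset.mem_compl.2 hiS
  have hfin := congrFun hd0 (e.symm ⟨i, hiSc⟩)
  simp only [hd, Pi.zero_apply, Equiv.apply_symm_apply] at hfin
  exact sub_eq_zero.1 hfin
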